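/- Let σ:[0,∞)→ℝ be continuous and satisfy, for some c ∈ [1,∞), sup_{ξ′∈[0,ξ]} σ²(ξ′) ≤ c(1 + ξ + σ²(ξ)) for every ξ ∈ [0,∞). Let T > 0 and let ρ : ℝ^d × [0,T] → [0,∞) be measurable with ess sup_{t∈[0,T]} ‖ρ(·,t)‖_{L¹(ℝ^d)} < ∞ and with σ∘ρ ∈ L²_loc(ℝ^d × [0,T]). Then for every R > 0, lim_{M→∞} ∫_0^T ∫_{B_R} ( sup_{ξ ∈ [M, min(M+1, ρ(x,t))]} |σ(ξ)| )² · 𝟙_{ρ(x,t) > M} dx dt = 0; that is, sup_{ξ∈[M,(M+1)∧ρ]} |σ(ξ)| 𝟙_{ρ>M} → 0 strongly in L²_loc(ℝ^d × [0,T]) as M → ∞. -/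

import Mathlib

open MeasureTheory

/-- If `σ` satisfies the growth condition `sup_{[0,ξ]} σ² ≤ c(1 + ξ + σ²(ξ))` and
`ρ ∈ L^∞_t L¹_x` is nonnegative with `σ∘ρ ∈ L²_loc`, then
`sup_{ξ∈[M,(M+1)∧ρ]} |σ(ξ)| 𝟙_{ρ>M} → 0` in `L²_loc(ℝ^d × [0,T])` as `M → ∞`. -/
theorem stmt12 (d : ℕ) (T : ℝ) (hT : 0 < T) (c : ℝ) (hc : 1 ≤ c)
    (σ : ℝ → ℝ) (hσc : ContinuousOn σ (Set.Ici 0))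
    (hgrowth : ∀ ξ : ℝ, 0 ≤ ξ → ∀ ξ' ∈ Set.Icc 0 ξ, σ ξ' ^ 2 ≤ c * (1 + ξ + σ ξ ^ 2))
    (ρ : EuclideanSpace ℝ (Fin d) → ℝ → ℝ)
    (hρmeas : Measurable (Function.uncurry ρ))
    (hρnonneg : ∀ x t, 0 ≤ ρ x t)
    (hρL1 : ∃ C : ℝ, ∀ᵐ t ∂(volume.restrict (Set.Icc (0:ℝ) T)),
      Integrable (fun x => ρ x t) volume ∧ ∫ x, ρ x t ≤ C)
    (hσρ : ∀ R : ℝ, 0 < R →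
      IntegrableOn (fun p : EuclideanSpace ℝ (Fin d) × ℝ => σ (ρ p.1 p.2) ^ 2)
        ((Metric.ball (0 : EuclideanSpace ℝ (Fin d)) R) ×ˢ Set.Icc (0:ℝ) T) volume) :
    ∀ R : ℝ, 0 < R →
      Filter.Tendsto (fun M : ℝ =>
        ∫ p in (Metric.ball (0 : EuclideanSpace ℝ (Fin d)) R) ×ˢ Set.Icc (0:ℝ) T,
          Set.indicator {q : EuclideanSpace ℝ (Fin d) × ℝ | M < ρ q.1 q.2}
            (fun q =>
              (sSup ((fun ξ => |σ ξ|) '' Set.Icc M (min (M+1) (ρ q.1 q.2)))) ^ 2) p)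
        Filter.atTop (nhds 0) := by
  intro R hR
  have hmeasρ : Measurable fun p : EuclideanSpace ℝ (Fin d) × ℝ => ρ p.1 p.2 := hρmeas
  set s : Set (EuclideanSpace ℝ (Fin d) × ℝ) := Metric.ball (0 : EuclideanSpace ℝ (Fin d)) R ×ˢ Set.Icc (0:ℝ) T with hs
  set μ : Measure (EuclideanSpace ℝ (Fin d) × ℝ) := volume.restrict s with hμdef
  -- the family of functions
  set F : ℝ → EuclideanSpace ℝ (Fin d) × ℝ → ℝ := fun M p =>
    Set.indicator {q : EuclideanSpace ℝ (Fin d) × ℝ | M < ρ q.1 q.2}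
      (fun q => (sSup ((fun ξ => |σ ξ|) '' Set.Icc M (min (M+1) (ρ q.1 q.2)))) ^ 2) p with hF
  -- the dominating function
  set b : EuclideanSpace ℝ (Fin d) × ℝ → ℝ := fun p => c * (1 + ρ p.1 p.2 + σ (ρ p.1 p.2) ^ 2) with hb
  -- nonnegativity of sSup
  have hgnn : ∀ (M : ℝ) (r : ℝ),
      0 ≤ sSup ((fun ξ => |σ ξ|) '' Set.Icc M (min (M+1) r)) := by
    intro M r
    apply Real.sSup_nonneg
    rintro y ⟨ξ, -, rfl⟩
    exact abs_nonneg _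
  -- bddAbove
  have hbdd : ∀ (M : ℝ), 0 ≤ M → ∀ (r : ℝ),
      BddAbove ((fun ξ => |σ ξ|) '' Set.Icc M (min (M+1) r)) := by
    intro M hM r
    have h1 : Set.Icc M (M+1) ⊆ Set.Ici 0 := fun x hx => le_trans hM hx.1
    have hcont : ContinuousOn (fun ξ => |σ ξ|) (Set.Icc M (M+1)) := (hσc.mono h1).abs
    have hcomp : IsCompact ((fun ξ => |σ ξ|) '' Set.Icc M (M+1)) :=
      isCompact_Icc.image_of_continuousOn hcont
    exact hcomp.bddAbove.mono
      (Set.image_mono (Set.Icc_subset_Icc_right (min_le_left _ _)))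
  -- monotonicity
  have hmono : ∀ (M : ℝ), 0 ≤ M →
      Monotone (fun r => sSup ((fun ξ => |σ ξ|) '' Set.Icc M (min (M+1) r))) := by
    intro M hM r r' hrr'
    have hsub : (fun ξ => |σ ξ|) '' Set.Icc M (min (M+1) r) ⊆
        (fun ξ => |σ ξ|) '' Set.Icc M (min (M+1) r') :=
      Set.image_mono (Set.Icc_subset_Icc_right (min_le_min le_rfl hrr'))
    by_cases hne : ((fun ξ => |σ ξ|) '' Set.Icc M (min (M+1) r)).Nonempty
    · exact csSup_le_csSup (hbdd M hM r') hne hsub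
    · rw [Set.not_nonempty_iff_eq_empty] at hne
      simp only [hne, Real.sSup_empty]
      exact hgnn M r'
  -- key pointwise bound
  have hkey : ∀ (M : ℝ), 0 ≤ M → ∀ (r : ℝ), 0 ≤ r →
      (sSup ((fun ξ => |σ ξ|) '' Set.Icc M (min (M+1) r))) ^ 2
        ≤ c * (1 + r + σ r ^ 2) := by
    intro M hM r hr
    have hRb : 0 ≤ c * (1 + r + σ r ^ 2) := by
      have h1 : 0 ≤ 1 + r + σ r ^ 2 := by nlinarith [sq_nonneg (σ r)]
      exact mul_nonneg (le_trans zero_le_one hc) h1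
    have hle : sSup ((fun ξ => |σ ξ|) '' Set.Icc M (min (M+1) r))
        ≤ Real.sqrt (c * (1 + r + σ r ^ 2)) := by
      apply Real.sSup_le _ (Real.sqrt_nonneg _)
      rintro y ⟨ξ, ⟨hξ1, hξ2⟩, rfl⟩
      have hgr := hgrowth r hr ξ ⟨le_trans hM hξ1, le_trans hξ2 (min_le_right _ _)⟩
      calc |σ ξ| = Real.sqrt (σ ξ ^ 2) := (Real.sqrt_sq_eq_abs _).symm
        _ ≤ Real.sqrt (c * (1 + r + σ r ^ 2)) := Real.sqrt_le_sqrt hgr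
    calc (sSup ((fun ξ => |σ ξ|) '' Set.Icc M (min (M+1) r))) ^ 2
        ≤ Real.sqrt (c * (1 + r + σ r ^ 2)) ^ 2 := by
          exact pow_le_pow_left₀ (hgnn M r) hle 2
      _ = c * (1 + r + σ r ^ 2) := Real.sq_sqrt hRb
  -- nonnegativity of b
  have hbnn : ∀ p, 0 ≤ b p := by
    intro p
    have := hρnonneg p.1 p.2
    have h1 : 0 ≤ 1 + ρ p.1 p.2 + σ (ρ p.1 p.2) ^ 2 := by nlinarith [sq_nonneg (σ (ρ p.1 p.2))]
    exact mul_nonneg (le_trans zero_le_one hc) h1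
  -- measurability of F M for M ≥ 0
  have hFmeas : ∀ᶠ M in Filter.atTop, AEStronglyMeasurable (F M) μ := by
    filter_upwards [Filter.eventually_ge_atTop (0:ℝ)] with M hM
    have h1 : Measurable fun p : EuclideanSpace ℝ (Fin d) × ℝ =>
        sSup ((fun ξ => |σ ξ|) '' Set.Icc M (min (M+1) (ρ p.1 p.2))) :=
      (hmono M hM).measurable.comp hmeasρ
    have h2 : MeasurableSet {q : EuclideanSpace ℝ (Fin d) × ℝ | M < ρ q.1 q.2} :=
      measurableSet_lt measurable_const hmeasρ
    exact ((h1.pow_const 2).indicator h2).aestronglyMeasurable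
  -- the a.e. bound
  have hbound : ∀ᶠ M in Filter.atTop, ∀ᵐ p ∂μ, ‖F M p‖ ≤ b p := by
    filter_upwards [Filter.eventually_ge_atTop (0:ℝ)] with M hM
    apply ae_of_all
    intro p
    have hFnn : 0 ≤ F M p := Set.indicator_nonneg (fun q _ => sq_nonneg _) p
    rw [Real.norm_eq_abs, abs_of_nonneg hFnn]
    by_cases hp : p ∈ {q : EuclideanSpace ℝ (Fin d) × ℝ | M < ρ q.1 q.2}
    · rw [hF]
      simp only [Set.indicator_of_mem hp]
      exact hkey M hM (ρ p.1 p.2) (hρnonneg p.1 p.2)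
    · rw [hF]
      simp only [Set.indicator_of_notMem hp]
      exact hbnn p
  -- finiteness of μ
  have hμs : (volume : Measure (EuclideanSpace ℝ (Fin d) × ℝ)) s < ⊤ := by
    rw [hs, Measure.volume_eq_prod, Measure.prod_prod]
    exact ENNReal.mul_lt_top measure_ball_lt_top measure_Icc_lt_top
  have hfin : IsFiniteMeasure μ := by
    constructor
    rw [hμdef, Measure.restrict_apply_univ]
    exact hμs
  -- integrability of ρ on s
  have hμeq : μ = (volume.restrict (Metric.ball (0:EuclideanSpace ℝ (Fin d)) R)).prod
      (volume.restrict (Set.Icc (0:ℝ) T)) := by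
    rw [hμdef, hs, Measure.volume_eq_prod, Measure.prod_restrict]
  have hρint : Integrable (fun p : EuclideanSpace ℝ (Fin d) × ℝ => ρ p.1 p.2) μ := by
    obtain ⟨C, hC⟩ := hρL1
    rw [hμeq]
    have hmeas' : AEStronglyMeasurable (fun p : EuclideanSpace ℝ (Fin d) × ℝ => ρ p.1 p.2)
        ((volume.restrict (Metric.ball (0:EuclideanSpace ℝ (Fin d)) R)).prod (volume.restrict (Set.Icc (0:ℝ) T))) :=
      hmeasρ.aestronglyMeasurable
    rw [integrable_prod_iff' hmeas']
    constructor
    · filter_upwards [hC] with t ht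
      exact ht.1.restrict
    · apply Integrable.mono' (integrable_const (max C 0))
      · exact ((hmeasρ.norm.stronglyMeasurable).integral_prod_left').aestronglyMeasurable
      · filter_upwards [hC] with t ht
        have h0 : (0:ℝ) ≤ ∫ x, ‖ρ x t‖ ∂(volume.restrict (Metric.ball (0:EuclideanSpace ℝ (Fin d)) R)) :=
          integral_nonneg fun x => norm_nonneg _
        rw [Real.norm_eq_abs, abs_of_nonneg h0]
        have heq : ∫ x, ‖ρ x t‖ ∂(volume.restrict (Metric.ball (0:EuclideanSpace ℝ (Fin d)) R))
            = ∫ x in Metric.ball (0:EuclideanSpace ℝ (Fin d)) R, ρ x t := by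
          apply integral_congr_ae
          apply ae_of_all
          intro x
          exact Real.norm_of_nonneg (hρnonneg x t)
        rw [heq]
        calc ∫ x in Metric.ball (0:EuclideanSpace ℝ (Fin d)) R, ρ x t ≤ ∫ x, ρ x t :=
            setIntegral_le_integral ht.1 (ae_of_all _ fun x => hρnonneg x t)
          _ ≤ C := ht.2
          _ ≤ max C 0 := le_max_left _ _
  -- integrability of the bound
  have hbint : Integrable b μ := by
    have h1 : Integrable (fun _ : EuclideanSpace ℝ (Fin d) × ℝ => (1:ℝ)) μ := integrable_const 1
    have h3 : Integrable (fun p : EuclideanSpace ℝ (Fin d) × ℝ => σ (ρ p.1 p.2) ^ 2) μ := hσρ R hR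
    exact ((h1.add hρint).add h3).const_mul c
  -- pointwise limit
  have hlim : ∀ᵐ p ∂μ, Filter.Tendsto (fun M => F M p) Filter.atTop (nhds ((fun _ => (0:ℝ)) p)) := by
    apply ae_of_all
    intro p
    have hev : ∀ᶠ M in Filter.atTop, F M p = 0 := by
      filter_upwards [Filter.eventually_ge_atTop (ρ p.1 p.2)] with M hM
      have hp : p ∉ {q : EuclideanSpace ℝ (Fin d) × ℝ | M < ρ q.1 q.2} := fun h => absurd hM (not_le.mpr h)
      rw [hF]
      simp only [Set.indicator_of_notMem hp]
    exact Filter.Tendsto.congr' (Filter.EventuallyEq.symm hev) tendsto_const_nhds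
  have := tendsto_integral_filter_of_dominated_convergence (μ := μ) b hFmeas hbound hbint hlim
  simpa using this
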